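/- arXiv:1912.05477 — 4 statements merged into one kernel-verified Lean document; each statement's English description precedes it below -/
import Mathlib

section
/- Let u : ℝⁿ → ℝ be 1-Lipschitz, let θ₀ be a unit vector, and suppose c ∈ ℝ satisfies r − u(rθ₀) ≤ c for all r ≥ 0, i.e. the half-line {(rθ₀, r − c) : r ≥ 0} in ℝⁿ × ℝ lies weakly below the graph of u. Then u(x) ≥ ⟨θ₀, x⟩ − c for all x ∈ ℝⁿ. -/
theorem stmt_8 (n : ℕ) (u : EuclideanSpace ℝ (Fin n) → ℝ)
    (hu : LipschitzWith 1 u)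
    (θ₀ : EuclideanSpace ℝ (Fin n)) (hθ₀ : ‖θ₀‖ = 1) (c : ℝ)
    (h : ∀ r : ℝ, 0 ≤ r → r - u (r • θ₀) ≤ c) :
    ∀ x : EuclideanSpace ℝ (Fin n), u x ≥ (inner ℝ θ₀ x : ℝ) - c := by
  intro x
  rw [ge_iff_le, sub_le_iff_le_add, real_inner_comm]
  refine le_of_forall_pos_le_add fun ε hε => ?_
  set I : ℝ := inner ℝ x θ₀ with hI
  set r : ℝ := max 0 I + ‖x‖ ^ 2 / (2 * ε) + 1 with hr
  have hr0 : 0 ≤ r := by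
    have := le_max_left 0 I
    have : 0 ≤ ‖x‖ ^ 2 / (2 * ε) := by positivity
    simp only [hr]; nlinarith [le_max_left 0 I]
  have ha : ‖x‖ ^ 2 / (2 * ε) ≤ r - I := by
    have := le_max_right 0 I
    simp only [hr]; linarith
  have ha0 : (0:ℝ) ≤ r - I := le_trans (by positivity) ha
  have h2ae : ‖x‖ ^ 2 ≤ 2 * (r - I) * ε := by
    rw [div_le_iff₀ (by positivity)] at ha
    nlinarith
  -- norm computation
  have hnorm : ‖x - r • θ₀‖ ^ 2 = ‖x‖ ^ 2 - 2 * r * I + r ^ 2 := by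
    rw [@norm_sub_sq_real, real_inner_smul_right, norm_smul, hθ₀, Real.norm_eq_abs,
      abs_of_nonneg hr0]
    ring
  have hII : I ^ 2 ≥ 0 := sq_nonneg I
  have hkey : ‖x - r • θ₀‖ ≤ (r - I) + ε := by
    have hsq : ‖x - r • θ₀‖ ^ 2 ≤ ((r - I) + ε) ^ 2 := by
      rw [hnorm]; nlinarith [sq_nonneg I]
    nlinarith [norm_nonneg (x - r • θ₀), sq_nonneg (‖x - r • θ₀‖ - ((r - I) + ε))]
  have hlip : u (r • θ₀) - u x ≤ ‖x - r • θ₀‖ := by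
    have := hu.dist_le_mul (r • θ₀) x
    simp only [NNReal.coe_one, one_mul, Real.dist_eq, dist_eq_norm] at this
    have h1 := (abs_le.mp this).2
    have h2 : ‖r • θ₀ - x‖ = ‖x - r • θ₀‖ := norm_sub_rev _ _
    have h3 := abs_sub_abs_le_abs_sub (u (r • θ₀)) (u x)
    linarith [le_abs_self (u (r • θ₀) - u x), this, h2 ▸ this]
  have hc := h r hr0
  linarith
end

section
/- Let Σ be the graph of a 1-Lipschitz function f : ℝⁿ → ℝ in Minkowski (n+1)-space, and suppose that for every point p ∈ Σ there exists a future-directed nonzero null vector v with p + v ∈ Σ (Σ is an entire past horizon). Then f is convex. -/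
open scoped RealInnerProductSpace

lemma lip_sub {E : Type*} [NormedAddCommGroup E] {f : E → ℝ}
    (hlip : LipschitzWith 1 f) (a b : E) : f a - f b ≤ ‖a - b‖ := by
  have := hlip.dist_le_mul a b
  rw [Real.dist_eq, dist_eq_norm] at this
  calc f a - f b ≤ |f a - f b| := le_abs_self _
    _ ≤ ‖a - b‖ := by simpa using this

lemma sqrt_bound {N a b : ℝ} (hN : 0 ≤ N) (ha : 0 < a) (hb : 0 ≤ b)
    (h : N ^ 2 = a ^ 2 + b) : N ≤ a + b / (2 * a) := by
  have h2 : a ^ 2 + b ≤ (a + b / (2 * a)) ^ 2 := by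
    have hmc : 2 * a * (b / (2 * a)) = b := by field_simp
    nlinarith [sq_nonneg (b / (2 * a))]
  calc N = Real.sqrt (a ^ 2 + b) := by rw [← h, Real.sqrt_sq hN]
    _ ≤ Real.sqrt ((a + b / (2 * a)) ^ 2) := Real.sqrt_le_sqrt h2
    _ = a + b / (2 * a) := Real.sqrt_sq (by positivity)

set_option maxHeartbeats 1000000 in
lemma support_lemma (n : ℕ) (f : EuclideanSpace ℝ (Fin n) → ℝ)
    (hlip : LipschitzWith 1 f)
    (hhor : ∀ x : EuclideanSpace ℝ (Fin n),
      ∃ w : EuclideanSpace ℝ (Fin n), w ≠ 0 ∧ f (x + w) = f x + ‖w‖)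
    (x : EuclideanSpace ℝ (Fin n)) :
    ∃ u : EuclideanSpace ℝ (Fin n), ‖u‖ = 1 ∧ ∀ y, f x + ⟪u, y - x⟫ ≤ f y := by
  obtain ⟨w₀, hw₀ne, hw₀⟩ := hhor x
  have hw₀pos : 0 < ‖w₀‖ := norm_pos_iff.mpr hw₀ne
  set u : EuclideanSpace ℝ (Fin n) := ‖w₀‖⁻¹ • w₀ with hudef
  have hu : ‖u‖ = 1 := by
    rw [hudef, norm_smul, norm_inv, norm_norm, inv_mul_cancel₀ (ne_of_gt hw₀pos)]
  have hune : u ≠ 0 := by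
    intro h; rw [h, norm_zero] at hu; norm_num at hu
  refine ⟨u, hu, ?_⟩
  set A : Set ℝ := {t | 0 ≤ t ∧ f (x + t • u) = f x + t} with hA
  have hnormsmul : ∀ t : ℝ, 0 ≤ t → ‖t • u‖ = t := fun t ht => by
    rw [norm_smul, hu, mul_one, Real.norm_eq_abs, abs_of_nonneg ht]
  have hsand : ∀ t ∈ A, ∀ s, 0 ≤ s → s ≤ t → s ∈ A := by
    intro t ht s hs hst
    refine ⟨hs, le_antisymm ?_ ?_⟩
    · have h1 := lip_sub hlip (x + s • u) x
      rw [add_sub_cancel_left, hnormsmul s hs] at h1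
      linarith
    · have h2 := lip_sub hlip (x + t • u) (x + s • u)
      have he : x + t • u - (x + s • u) = (t - s) • u := by
        rw [sub_smul]; abel
      rw [he, hnormsmul _ (by linarith), ht.2] at h2
      linarith
  have hmem0 : ‖w₀‖ ∈ A := by
    refine ⟨hw₀pos.le, ?_⟩
    rw [hudef, smul_smul, mul_inv_cancel₀ (ne_of_gt hw₀pos), one_smul]
    exact hw₀
  have hall : ∀ t, 0 ≤ t → t ∈ A := by
    intro t ht
    by_contra hnot
    have hbdd : BddAbove A := ⟨t, fun s hs => le_of_not_gt fun h => hnot (hsand s hs t ht h.le)⟩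
    have hcl : IsClosed A := by
      have hcont : Continuous fun r : ℝ => f (x + r • u) :=
        hlip.continuous.comp (by continuity)
      exact (isClosed_le continuous_const continuous_id).inter
        (isClosed_eq hcont (continuous_const.add continuous_id))
    have hne : A.Nonempty := ⟨‖w₀‖, hmem0⟩
    have hTA : sSup A ∈ A := hcl.csSup_mem hne hbdd
    set T := sSup A with hT
    have hTpos : 0 < T := lt_of_lt_of_le hw₀pos (le_csSup hbdd hmem0)
    obtain ⟨w, hwne, hw⟩ := hhor (x + T • u)
    have h1 : f (x + T • u + w) - f x ≤ ‖T • u + w‖ := by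
      have := lip_sub hlip (x + T • u + w) x
      rwa [show x + T • u + w - x = T • u + w by abel] at this
    have heq : ‖T • u + w‖ = ‖T • u‖ + ‖w‖ := by
      have h2 : ‖T • u + w‖ ≤ T + ‖w‖ := by
        refine (norm_add_le _ _).trans ?_
        rw [hnormsmul T hTpos.le]
      rw [hnormsmul T hTpos.le]
      rw [hw, hTA.2] at h1
      linarith
    have hray : SameRay ℝ (T • u) w := sameRay_iff_norm_add.mpr heq
    obtain ⟨c, hc, hcw⟩ := hray.exists_nonneg_left (smul_ne_zero (ne_of_gt hTpos) hune)
    have hwn : ‖w‖ = c * T := by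
      rw [← hcw, smul_smul, hnormsmul _ (by positivity), mul_comm]
    have hmemT : T + c * T ∈ A := by
      refine ⟨by positivity, ?_⟩
      have he : x + (T + c * T) • u = x + T • u + w := by
        rw [← hcw]; module
      rw [he, hw, hTA.2, hwn]; ring
    have hle : T + c * T ≤ T := le_csSup hbdd hmemT
    have hcT : 0 < c * T := by
      have : 0 < ‖w‖ := norm_pos_iff.mpr hwne
      linarith [hwn ▸ this]
    linarith
  intro y
  set v : EuclideanSpace ℝ (Fin n) := y - x with hv
  by_contra hcon
  push_neg at hcon
  set ε : ℝ := f x + ⟪u, v⟫ - f y with hε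
  have hεpos : 0 < ε := by rw [hε]; linarith
  set b : ℝ := ‖v‖ ^ 2 - ⟪u, v⟫ ^ 2 with hb
  have hbnn : 0 ≤ b := by
    have h1 := abs_real_inner_le_norm u v
    rw [hu, one_mul] at h1
    have h2 := abs_nonneg ⟪u, v⟫
    rw [hb]
    nlinarith [sq_abs ⟪u, v⟫]
  set t : ℝ := max 0 ⟪u, v⟫ + b / (2 * ε) + 1 with htd
  have hdivnn : 0 ≤ b / (2 * ε) := by positivity
  have htnn : 0 ≤ t := by
    have := le_max_left 0 ⟪u, v⟫; rw [htd]; linarith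
  set a : ℝ := t - ⟪u, v⟫ with had
  have hage : b / (2 * ε) + 1 ≤ a := by
    have := le_max_right 0 ⟪u, v⟫; rw [had, htd]; linarith
  have hapos : 0 < a := lt_of_lt_of_le (by positivity) hage
  have htA := hall t htnn
  have hfy : f (x + t • u) - f y ≤ ‖t • u - v‖ := by
    have := lip_sub hlip (x + t • u) y
    rwa [show x + t • u - y = t • u - v by rw [hv]; abel] at this
  have hnorm2 : ‖t • u - v‖ ^ 2 = a ^ 2 + b := by
    rw [norm_sub_sq_real, real_inner_smul_left, norm_smul, hu, mul_one,
      Real.norm_eq_abs, abs_of_nonneg htnn, hb, had]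
    ring
  have hle : ‖t • u - v‖ ≤ a + b / (2 * a) :=
    sqrt_bound (norm_nonneg _) hapos hbnn hnorm2
  have hbound : b / (2 * a) < ε := by
    rw [div_lt_iff₀ (by positivity)]
    have hbε : ε * (b / (2 * ε)) = b / 2 := by field_simp
    nlinarith [mul_le_mul_of_nonneg_left hage hεpos.le]
  have hta : f x + t = f (x + t • u) := htA.2.symm
  linarith [hfy, hle, hbound, hta, had, hε]

theorem stmt_9 (n : ℕ) (f : EuclideanSpace ℝ (Fin n) → ℝ)
    (hlip : LipschitzWith 1 f)
    (hhor : ∀ x : EuclideanSpace ℝ (Fin n),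
      ∃ w : EuclideanSpace ℝ (Fin n), w ≠ 0 ∧ f (x + w) = f x + ‖w‖) :
    ConvexOn ℝ Set.univ f := by
  refine ⟨convex_univ, fun p _ q _ a b ha hb hab => ?_⟩
  set z := a • p + b • q with hz
  obtain ⟨u, hu, hsupp⟩ := support_lemma n f hlip hhor z
  have h1 := hsupp p
  have h2 := hsupp q
  have hzero : a • (p - z) + b • (q - z) = z - (a + b) • z := by
    rw [hz]; module
  rw [hab, one_smul, sub_self] at hzero
  have hinner : a * ⟪u, p - z⟫ + b * ⟪u, q - z⟫ = 0 := by
    rw [← real_inner_smul_right, ← real_inner_smul_right, ← inner_add_right, hzero,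
      inner_zero_right]
  simp only [smul_eq_mul]
  have key : a * f z + b * f z = f z := by rw [← add_mul, hab, one_mul]
  linarith [mul_le_mul_of_nonneg_left h1 ha, mul_le_mul_of_nonneg_left h2 hb]
end

section
/- Let f : ℝⁿ → ℝ be a convex 1-Lipschitz function, p ∈ ℝⁿ, and v ∈ ℝⁿ a unit vector such that f(p + v) = f(p) + 1. Then f(p + tv) = f(p) + t for all t ≥ 0. -/
theorem stmt_10 (n : ℕ) (f : EuclideanSpace ℝ (Fin n) → ℝ)
    (hconv : ConvexOn ℝ Set.univ f) (hlip : LipschitzWith 1 f)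
    (p v : EuclideanSpace ℝ (Fin n)) (hv : ‖v‖ = 1)
    (h : f (p + v) = f p + 1) :
    ∀ t : ℝ, 0 ≤ t → f (p + t • v) = f p + t := by
  have key : ∀ x y : EuclideanSpace ℝ (Fin n), f x - f y ≤ ‖x - y‖ := by
    intro x y
    have h1 := hlip.dist_le_mul x y
    rw [NNReal.coe_one, one_mul, Real.dist_eq, dist_eq_norm] at h1
    exact le_trans (le_abs_self _) h1
  intro t ht
  -- upper bound
  have hub : f (p + t • v) ≤ f p + t := by
    have := key (p + t • v) p
    have hsub : (p + t • v) - p = t • v := by abel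
    rw [hsub, norm_smul, hv, mul_one, Real.norm_eq_abs, abs_of_nonneg ht] at this
    linarith
  rcases le_or_gt t 1 with ht1 | ht1
  · -- lower bound via Lipschitz between p+v and p+t•v
    have := key (p + v) (p + t • v)
    have hsub : (p + v) - (p + t • v) = (1 - t) • v := by
      rw [sub_smul, one_smul]; abel
    rw [hsub, norm_smul, hv, mul_one, Real.norm_eq_abs, abs_of_nonneg (by linarith)] at this
    linarith
  · -- lower bound via convexity
    have htpos : (0:ℝ) < t := lt_trans one_pos ht1
    have ha : (0:ℝ) ≤ 1 - 1/t := by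
      have : 1/t ≤ 1 := by
        rw [div_le_one htpos]; linarith
      linarith
    have hb : (0:ℝ) ≤ 1/t := by positivity
    have hcomb := hconv.2 (Set.mem_univ p) (Set.mem_univ (p + t • v)) ha hb (by ring)
    have heq : (1 - 1/t) • p + (1/t) • (p + t • v) = p + v := by
      rw [smul_add, smul_smul, one_div_mul_cancel (ne_of_gt htpos), one_smul,
        ← add_assoc, ← add_smul]
      norm_num
    rw [heq, h] at hcomb
    have : t * (f p + 1) ≤ t * ((1 - 1/t) * f p + (1/t) * f (p + t • v)) :=
      mul_le_mul_of_nonneg_left hcomb htpos.le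
    have hexp : t * ((1 - 1/t) * f p + (1/t) * f (p + t • v))
        = (t - 1) * f p + f (p + t • v) := by
      field_simp
    rw [hexp] at this
    linarith
end

section
/- Suppose v₀, u : ℝⁿ → ℝ are continuous, and for every x ∈ ℝⁿ there exists a unit vector ξ such that v₀(x + tξ) = v₀(x) + t for all small t ≥ 0, while u is strictly 1-Lipschitz (|u(x) − u(y)| < |x − y| for x ≠ y). Then the function u − v₀ has no local minimum. -/
theorem stmt_18 (n : ℕ) (v₀ u : EuclideanSpace ℝ (Fin n) → ℝ)
    (hv₀cont : Continuous v₀) (hucont : Continuous u)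
    (hray : ∀ x : EuclideanSpace ℝ (Fin n),
      ∃ ξ : EuclideanSpace ℝ (Fin n), ‖ξ‖ = 1 ∧
        ∃ ε > (0 : ℝ), ∀ t ∈ Set.Icc (0 : ℝ) ε, v₀ (x + t • ξ) = v₀ x + t)
    (hu : ∀ x y, x ≠ y → |u x - u y| < ‖x - y‖) :
    ∀ x, ¬ IsLocalMin (fun y => u y - v₀ y) x := by
  intro x hmin
  obtain ⟨ξ, hξ, ε, hε, hv⟩ := hray x
  obtain ⟨δ, hδ, hloc⟩ := Metric.eventually_nhds_iff.mp hmin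
  set t : ℝ := min ε δ / 2 with ht
  have ht0 : 0 < t := by positivity
  have htε : t ≤ ε := by
    have h := min_le_left ε δ
    have : (0:ℝ) ≤ min ε δ := le_min hε.le hδ.le
    rw [ht]; linarith
  set y := x + t • ξ with hy
  have hdist : dist y x = t := by
    rw [dist_eq_norm]
    simp [hy, norm_smul, hξ, abs_of_pos ht0]
  have hyx : y ≠ x := by
    intro h
    rw [h] at hdist
    simp at hdist
    linarith
  have h1 : u x - v₀ x ≤ u y - v₀ y := hloc (by
    rw [hdist]
    calc t = min ε δ / 2 := rfl
      _ < min ε δ := by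
        have := lt_min hε hδ
        linarith [half_lt_self this]
      _ ≤ δ := min_le_right _ _)
  have h2 : v₀ y = v₀ x + t := hv t ⟨ht0.le, htε⟩
  have h3 := hu y x hyx
  rw [show y - x = t • ξ by simp [hy], norm_smul, hξ, Real.norm_eq_abs, abs_of_pos ht0, mul_one] at h3
  have : t ≤ u y - u x := by rw [h2] at h1; linarith
  have := abs_lt.mp h3
  linarith
end
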